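/- Let V be a complex vector space equipped with a linear involution σ, with eigenspace decomposition V = V(1) ⊕ V(−1). Extend σ to an algebra involution of the symmetric algebra S(V). If U ⊂ V is any subspace complementary to V(−1), then the composition S(U) → S(V) → S(V)/⟨σ(a) − a : a ∈ S(V)⟩ is an algebra isomorphism. -/

import Mathlib

/-- Let `V` be a complex vector space with a linear involution `σ`,
`V(-1)` its `(-1)`-eigenspace, and `U` a subspace complementary to `V(-1)`.
The symmetric algebras `S(V)` and `S(U)` are axiomatized by their universal properties
(`S` with `ι`, resp. `SU` with `ιU`).  If `σS` is the algebra extension of `σ` to `S(V)`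
and `g : S(U) → S(V)` is induced by the inclusion `U ⊆ V`, then the composition
`S(U) → S(V) → S(V)/⟨σ(a) - a⟩` is an isomorphism (i.e. bijective). -/
theorem stmt0
    (V : Type) [AddCommGroup V] [Module ℂ V]
    (σ : V →ₗ[ℂ] V) (hσ : ∀ v, σ (σ v) = v)
    (U : Submodule ℂ V)
    (hU : IsCompl U (LinearMap.ker (σ + LinearMap.id)))
    (S : Type) [CommRing S] [Algebra ℂ S] (ι : V →ₗ[ℂ] S)
    (hS : ∀ (B : Type) [CommRing B] [Algebra ℂ B] (f : V →ₗ[ℂ] B),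
      ∃! φ : S →ₐ[ℂ] B, ∀ v, φ (ι v) = f v)
    (SU : Type) [CommRing SU] [Algebra ℂ SU] (ιU : U →ₗ[ℂ] SU)
    (hSU : ∀ (B : Type) [CommRing B] [Algebra ℂ B] (f : U →ₗ[ℂ] B),
      ∃! φ : SU →ₐ[ℂ] B, ∀ u, φ (ιU u) = f u)
    (σS : S →ₐ[ℂ] S) (hσS : ∀ v, σS (ι v) = ι (σ v))
    (g : SU →ₐ[ℂ] S) (hg : ∀ u : U, g (ιU u) = ι (u : V)) :
    Function.Bijective
      ((Ideal.Quotient.mkₐ ℂ (Ideal.span {x : S | ∃ a : S, x = σS a - a})).comp g) := by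
  set W := LinearMap.ker (σ + LinearMap.id) with hW
  set p := U.linearProjOfIsCompl W hU with hp
  set I := Ideal.span {x : S | ∃ a : S, x = σS a - a} with hI
  -- obtain φ : S →ₐ SU from universal property
  obtain ⟨φ, hφ, hφuniq⟩ := hS SU (ιU.comp p)
  -- p (σ v) = p v
  have hpσ : ∀ v, p (σ v) = p v := by
    intro v
    have hmem : σ v - v ∈ W := by
      simp only [hW, LinearMap.mem_ker, LinearMap.add_apply, LinearMap.id_apply,
        map_sub, hσ]
      abel
    have := Submodule.linearProjOfIsCompl_apply_right hU ⟨σ v - v, hmem⟩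
    have h2 : p (σ v - v) = 0 := this
    have := map_sub p (σ v) v
    rw [h2] at this
    exact sub_eq_zero.mp this.symm
  -- φ ∘ σS = φ
  have hcomp : φ.comp σS = φ := by
    have h1 : ∀ v, (φ.comp σS) (ι v) = (ιU.comp p) v := by
      intro v
      simp only [AlgHom.comp_apply, hσS, hφ, LinearMap.comp_apply, hpσ]
    rw [hφuniq _ h1, hφuniq _ hφ]
  -- φ kills the ideal
  have hkill : ∀ x ∈ I, φ x = 0 := by
    intro x hx
    have hle : I ≤ RingHom.ker φ.toRingHom := by
      rw [hI, Ideal.span_le]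
      rintro y ⟨a, rfl⟩
      have : φ (σS a) = φ a := by
        have := congrArg (fun ψ => ψ a) hcomp
        simpa using this
      simp [RingHom.mem_ker, map_sub, this]
    exact hle hx
  -- descend to ψ : S/I → SU
  let ψ : (S ⧸ I) →ₐ[ℂ] SU := Ideal.Quotient.liftₐ I φ hkill
  set F := (Ideal.Quotient.mkₐ ℂ I).comp g with hF
  -- left inverse: ψ ∘ F = id on SU
  have hleft : ∀ x, ψ (F x) = x := by
    obtain ⟨χ, hχ, hχuniq⟩ := hSU SU ιU
    have hid : (AlgHom.id ℂ SU) = χ := hχuniq _ (fun u => rfl)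
    have h1 : ψ.comp F = χ := by
      apply hχuniq
      intro u
      have hpu : p (u : V) = u := Submodule.linearProjOfIsCompl_apply_left hU u
      simp only [AlgHom.comp_apply, hF, Ideal.Quotient.mkₐ_eq_mk, hg]
      show ψ (Ideal.Quotient.mk I (ι (u : V))) = ιU u
      rw [show ψ (Ideal.Quotient.mk I (ι (u : V))) = φ (ι (u : V)) from rfl, hφ]
      simp [hpu]
    intro x
    have := congrArg (fun ψ' => ψ' x) h1
    simp only [AlgHom.comp_apply] at this
    rw [this, ← hid, AlgHom.id_apply]
  -- right inverse: F ∘ ψ = id on S/I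
  have hright : ∀ x, F (ψ x) = x := by
    have key : (F.comp φ) = (Ideal.Quotient.mkₐ ℂ I) := by
      obtain ⟨χ, hχ, hχuniq⟩ := hS (S ⧸ I) ((Ideal.Quotient.mkₐ ℂ I).toLinearMap.comp ι)
      have h1 : F.comp φ = χ := by
        apply hχuniq
        intro v
        simp only [AlgHom.comp_apply, hφ, LinearMap.comp_apply]
        show F (ιU (p v)) = Ideal.Quotient.mk I (ι v)
        simp only [hF, AlgHom.comp_apply, hg, Ideal.Quotient.mkₐ_eq_mk]
        -- need: ι (p v) - ι v ∈ I
        rw [Ideal.Quotient.mk_eq_mk_iff_sub_mem]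
        have hmem : (v : V) - (p v : V) ∈ W := by
          rw [← Submodule.linearProjOfIsCompl_apply_eq_zero_iff hU]; change p ((v : V) - (p v : V)) = 0
          rw [map_sub]
          have : p ((p v : V)) = p v := Submodule.linearProjOfIsCompl_apply_left hU (p v)
          rw [this, sub_self]
        have hσw : σ ((v : V) - p v) = -((v : V) - p v) := by
          have := hmem
          simp only [hW, LinearMap.mem_ker, LinearMap.add_apply, LinearMap.id_apply] at this
          exact eq_neg_of_add_eq_zero_left this
        have hgen : σS (ι ((v:V) - p v)) - ι ((v:V) - p v) = (-2 : ℂ) • ι ((v:V) - p v) := by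
          rw [hσS, hσw, map_neg]
          module
        have hιw : ι ((v:V) - p v) ∈ I := by
          have h2 : σS (ι ((v:V) - p v)) - ι ((v:V) - p v) ∈ I := by
            apply Ideal.subset_span
            exact ⟨ι ((v:V) - p v), rfl⟩
          rw [hgen] at h2
          have h3 : ((-2 : ℂ)⁻¹) • ((-2 : ℂ) • ι ((v:V) - p v)) ∈ I := by
            rw [Algebra.smul_def]
            exact I.mul_mem_left _ h2
          rwa [smul_smul, inv_mul_cancel₀ (by norm_num), one_smul] at h3
        have : ι ((p v : V)) - ι v = -(ι ((v:V) - p v)) := by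
          rw [map_sub]; abel
        rw [this]
        exact I.neg_mem hιw
      have h2 : (Ideal.Quotient.mkₐ ℂ I) = χ := hχuniq _ (fun v => rfl)
      rw [h1, h2]
    intro x
    obtain ⟨a, rfl⟩ := Ideal.Quotient.mk_surjective x
    have : ψ (Ideal.Quotient.mk I a) = φ a := rfl
    rw [this]
    have := congrArg (fun ψ' => ψ' a) key
    simpa using this
  exact Function.bijective_iff_has_inverse.mpr ⟨ψ, hleft, hright⟩
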